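/- Let ε₊ > 0, ε₋ > 0, a > 0, b > 0, c > 0 and n ≥ 1 be a natural number. Then for every M > 0 there exists λ > max{M, ε₊(nπ/c)²} satisfying the oscillatory form of the flat characteristic equation: tan(a·√(λ/ε₊ − (nπ/c)²))/(ε₊·√(λ/ε₊ − (nπ/c)²)) = tanh(b·√(λ/ε₋ + (nπ/c)²))/(ε₋·√(λ/ε₋ + (nπ/c)²)). Consequently, for each fixed n the set of solutions of the characteristic equation is unbounded above. -/

import Mathlib

open Real

private lemma my_tanh_pos {x : ℝ} (hx : 0 < x) : 0 < Real.tanh x := by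
  rw [Real.tanh_eq_sinh_div_cosh]
  exact div_pos (Real.sinh_pos_iff.2 hx) (Real.cosh_pos x)

private lemma my_tanh_lt_one (x : ℝ) : Real.tanh x < 1 := by
  rw [Real.tanh_eq_sinh_div_cosh, div_lt_one (Real.cosh_pos x)]
  exact Real.sinh_lt_cosh x

private lemma my_continuous_tanh : Continuous Real.tanh := by
  have h : Real.tanh = fun x => Real.sinh x / Real.cosh x := by
    funext x; exact Real.tanh_eq_sinh_div_cosh x
  rw [h]
  exact Real.continuous_sinh.div Real.continuous_cosh fun x => (Real.cosh_pos x).ne'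

set_option maxHeartbeats 800000 in
/-- For each fixed transverse mode n, the flat characteristic equation in
its oscillatory form has solutions λ above any bound: the set of eigenvalues is
unbounded above. -/
theorem stmt_6 (εp εm a b c : ℝ) (hεp : 0 < εp) (hεm : 0 < εm)
    (ha : 0 < a) (hb : 0 < b) (hc : 0 < c) (n : ℕ) (hn : 1 ≤ n) :
    ∀ M : ℝ, 0 < M →
      ∃ lam : ℝ, max M (εp * ((n : ℝ) * π / c) ^ 2) < lam ∧
        Real.tan (a * Real.sqrt (lam / εp - ((n : ℝ) * π / c) ^ 2)) /
            (εp * Real.sqrt (lam / εp - ((n : ℝ) * π / c) ^ 2))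
          = Real.tanh (b * Real.sqrt (lam / εm + ((n : ℝ) * π / c) ^ 2)) /
            (εm * Real.sqrt (lam / εm + ((n : ℝ) * π / c) ^ 2)) := by
  intro M hM
  set K : ℝ := ((n : ℝ) * π / c) ^ 2 with hKdef
  have hnpos : (0 : ℝ) < (n : ℝ) := by exact_mod_cast Nat.lt_of_lt_of_le Nat.zero_lt_one hn
  have hπ := Real.pi_pos
  have hK : 0 < K := by positivity
  set s : ℝ → ℝ := fun t => Real.sqrt (εp * (t ^ 2 + K) / εm + K) with hsdef
  have hs_arg_pos : ∀ t : ℝ, 0 < εp * (t ^ 2 + K) / εm + K := fun t => by positivity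
  have hs_pos : ∀ t : ℝ, 0 < s t := fun t => Real.sqrt_pos.2 (hs_arg_pos t)
  have hs_ge : ∀ t : ℝ, Real.sqrt K ≤ s t := fun t => by
    apply Real.sqrt_le_sqrt
    have : 0 ≤ εp * (t ^ 2 + K) / εm := by positivity
    linarith
  set g : ℝ → ℝ := fun t => Real.tanh (b * s t) / (εm * s t) with hgdef
  have hg_pos : ∀ t : ℝ, 0 < g t := fun t =>
    div_pos (my_tanh_pos (by positivity)) (by positivity)
  have hsqrtK : 0 < Real.sqrt K := Real.sqrt_pos.2 hK
  set G : ℝ := 1 / (εm * Real.sqrt K) with hGdef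
  have hg_lt : ∀ t : ℝ, g t ≤ G := fun t => by
    have h1 : Real.tanh (b * s t) < 1 := my_tanh_lt_one _
    have h2 : εm * Real.sqrt K ≤ εm * s t := by
      have := hs_ge t; nlinarith
    have h3 : 0 < εm * Real.sqrt K := by positivity
    rw [hgdef, hGdef]
    exact div_le_div₀ (by norm_num) h1.le h3 h2
  -- continuity of g
  have hs_cont : Continuous s := by
    rw [hsdef]; fun_prop
  have hg_cont : Continuous g := by
    rw [hgdef]
    exact (my_continuous_tanh.comp (continuous_const.mul hs_cont)).div
      (continuous_const.mul hs_cont) (fun t => (mul_pos hεm (hs_pos t)).ne')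
  -- choose m large
  obtain ⟨m, hm⟩ := exists_nat_gt (a * Real.sqrt (M / εp) / π)
  set t0 : ℝ := (m : ℝ) * π / a with ht0def
  have ht0_gt : Real.sqrt (M / εp) < t0 := by
    rw [div_lt_iff₀ hπ] at hm
    rw [ht0def, lt_div_iff₀ ha]
    nlinarith
  have ht0_pos : 0 < t0 := lt_of_le_of_lt (Real.sqrt_nonneg _) ht0_gt
  set T : ℝ := t0 + π / (2 * a) with hTdef
  set C : ℝ := εp * T * G + 1 with hCdef
  have hGpos : 0 < G := by rw [hGdef]; positivity
  have hTpos : 0 < T := by rw [hTdef]; positivity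
  have hC_pos : 0 < C := by
    have : 0 < εp * T * G := by positivity
    linarith
  set u : ℝ := Real.arctan C with hudef
  have hu_pos : 0 < u := by
    rw [hudef, ← Real.arctan_zero]
    exact Real.arctan_strictMono hC_pos
  have hu_lt : u < π / 2 := Real.arctan_lt_pi_div_two C
  set t1 : ℝ := t0 + u / a with ht1def
  have ht01 : t0 < t1 := by
    rw [ht1def]
    have : 0 < u / a := by positivity
    linarith
  have ht1_pos : 0 < t1 := ht0_pos.trans ht01
  have ht1_lt : t1 < T := by
    rw [ht1def, hTdef]
    have : u / a < π / (2 * a) := by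
      rw [div_lt_div_iff₀ ha (by positivity)]
      nlinarith
    linarith
  -- key algebraic facts about a * t0 and a * t1
  have hat0 : a * t0 = (m : ℝ) * π := by rw [ht0def]; field_simp
  have hat1 : a * t1 = u + (m : ℝ) * π := by rw [ht1def, ht0def]; field_simp; ring
  -- cos (a*t) ≠ 0 on [t0, t1]
  have hcos_ne : ∀ t ∈ Set.Icc t0 t1, Real.cos (a * t) ≠ 0 := by
    intro t ht
    have h2 : 0 ≤ a * t - (m : ℝ) * π := by
      have h := ht.1
      nlinarith [hat0]
    have h3 : a * t - (m : ℝ) * π < π / 2 := by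
      have h := ht.2
      nlinarith [hat1]
    have h1 : a * t = (a * t - (m : ℝ) * π) + (m : ℝ) * π := by ring
    rw [h1, Real.cos_add_nat_mul_pi]
    have hcpos : 0 < Real.cos (a * t - (m : ℝ) * π) :=
      Real.cos_pos_of_mem_Ioo ⟨by linarith, h3⟩
    have hne : ((-1 : ℝ)) ^ m ≠ 0 := by
      apply pow_ne_zero; norm_num
    exact mul_ne_zero hne hcpos.ne'
  -- the function for the IVT
  set F : ℝ → ℝ := fun t => Real.tan (a * t) / (εp * t) - g t with hFdef
  have hF_cont : ContinuousOn F (Set.Icc t0 t1) := by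
    apply ContinuousOn.sub _ hg_cont.continuousOn
    apply ContinuousOn.div
    · intro t ht
      exact (((Real.continuousAt_tan.2 (hcos_ne t ht)).comp
        ((continuous_const.mul continuous_id).continuousAt))).continuousWithinAt
    · exact (continuous_const.mul continuous_id).continuousOn
    · intro t ht
      exact (mul_pos hεp (lt_of_lt_of_le ht0_pos ht.1)).ne'
  have hF0 : F t0 < 0 := by
    rw [hFdef]
    simp only
    rw [hat0, Real.tan_nat_mul_pi, zero_div]
    have := hg_pos t0
    linarith
  have hF1 : 0 < F t1 := by
    rw [hFdef]
    simp only
    rw [hat1, Real.tan_add_nat_mul_pi, hudef, Real.tan_arctan]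
    rw [sub_pos, lt_div_iff₀ (by positivity)]
    have e1 : g t1 * (εp * t1) ≤ G * (εp * t1) :=
      mul_le_mul_of_nonneg_right (hg_lt t1) (by positivity)
    have e2 : G * (εp * t1) < G * (εp * T) :=
      mul_lt_mul_of_pos_left (by nlinarith) hGpos
    rw [hCdef]
    nlinarith
  obtain ⟨t, htmem, htF⟩ := intermediate_value_Icc ht01.le hF_cont
    (Set.mem_Icc.2 ⟨hF0.le, hF1.le⟩)
  have ht_pos : 0 < t := lt_of_lt_of_le ht0_pos htmem.1
  refine ⟨εp * (t ^ 2 + K), ?_, ?_⟩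
  · -- max bound
    apply max_lt
    · have h1 : Real.sqrt (M / εp) < t := lt_of_lt_of_le ht0_gt htmem.1
      have h2 : M / εp < t ^ 2 := by
        have hs := Real.sq_sqrt (div_nonneg hM.le hεp.le)
        nlinarith [Real.sqrt_nonneg (M / εp)]
      have : M < εp * t ^ 2 := by
        rw [div_lt_iff₀ hεp] at h2; linarith
      nlinarith
    · nlinarith [pow_pos ht_pos 2]
  · -- the characteristic equation
    have hl1 : εp * (t ^ 2 + K) / εp - K = t ^ 2 := by field_simp; ring
    have hl2 : Real.sqrt (εp * (t ^ 2 + K) / εp - K) = t := by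
      rw [hl1]; exact Real.sqrt_sq ht_pos.le
    have hl3 : εp * (t ^ 2 + K) / εm + K = εp * (t ^ 2 + K) / εm + K := rfl
    rw [hl2]
    have hgoal : Real.tan (a * t) / (εp * t) = g t := by
      have := htF
      rw [hFdef] at this
      simpa [sub_eq_zero] using this
    rw [hgoal, hgdef, hsdef]
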